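/- If a system of random variables is simply consistently connected, then a coupling of it is multimaximally connected if and only if it is identically connected. Consequently, for simply consistently connected systems the Contextuality-by-Default definition of noncontextuality (existence of a multimaximally connected coupling) coincides with the sheaf-theoretic definition (existence of an identically connected coupling). -/

import Mathlib

abbrev Sgn : Type := ({-1, 1} : Finset ℤ)

def one : Sgn := ⟨1, by decide⟩

structure FDist (X : Type) [Fintype X] where
  m : X → ℝ
  nonneg : ∀ x, 0 ≤ m x
  total : ∑ x, m x = 1

def push {X Y : Type} [Fintype X] [DecidableEq Y] (p : X → ℝ) (f : X → Y) : Y → ℝ :=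
  fun y => ∑ x, if f x = y then p x else 0

section Systems

variable {Q C : Type} [Fintype Q] [Fintype C] [DecidableEq Q] [DecidableEq C]

abbrev Glob (pre : Q → C → Bool) : Type := {qc : Q × C // pre qc.1 qc.2}

def restr (pre : Q → C → Bool) (c : C) (f : Glob pre → Sgn) : {q : Q // pre q c} → Sgn :=
  fun q => f ⟨(q.1, c), q.2⟩

variable (pre : Q → C → Bool) (R : (c : C) → FDist ({q : Q // pre q c} → Sgn))

def IsCoupling (T : FDist (Glob pre → Sgn)) : Prop :=
  ∀ c : C, push T.m (restr pre c) = (R c).m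

def marg (c : C) (q : Q) (h : pre q c) : Sgn → ℝ :=
  push (R c).m (fun f => f ⟨q, h⟩)

def SimplyCC : Prop :=
  ∀ (q : Q) (c c' : C) (h : pre q c) (h' : pre q c'), marg pre R c q h = marg pre R c' q h'

def StronglyCC : Prop :=
  ∀ c c' : C,
    push (R c).m (fun f (q : {q : Q // pre q c ∧ pre q c'}) => f ⟨q.1, q.2.1⟩)
    = push (R c').m (fun f (q : {q : Q // pre q c ∧ pre q c'}) => f ⟨q.1, q.2.2⟩)

def prAgree (T : FDist (Glob pre → Sgn)) (q : Q) (c c' : C) (h : pre q c) (h' : pre q c') : ℝ :=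
  ∑ f, if f ⟨(q, c), h⟩ = f ⟨(q, c'), h'⟩ then T.m f else 0

def IdConn (T : FDist (Glob pre → Sgn)) : Prop :=
  ∀ (q : Q) (c c' : C) (h : pre q c) (h' : pre q c'), prAgree pre T q c c' h h' = 1

def IsAlphaCoupling (s : (Glob pre → Sgn) → ℝ) (α : ℝ) : Prop :=
  (∀ f, 0 ≤ s f) ∧ (∑ f, s f = α) ∧
  ∀ (c : C) (g : {q : Q // pre q c} → Sgn), push s (restr pre c) g ≤ (R c).m g

def IdConnSub (s : (Glob pre → Sgn) → ℝ) : Prop :=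
  ∀ (q : Q) (c c' : C) (h : pre q c) (h' : pre q c'),
    (∑ f, if f ⟨(q, c), h⟩ ≠ f ⟨(q, c'), h'⟩ then s f else 0) = 0

end Systems

/-- x is the maximal diagonal (agreement) probability among couplings of two
distributions on {−1,1} with mass functions μ and ν. -/
def PairMax (μ ν : Sgn → ℝ) (x : ℝ) : Prop :=
  IsGreatest
    {y : ℝ | ∃ W : FDist (Sgn × Sgn),
      push W.m Prod.fst = μ ∧ push W.m Prod.snd = ν ∧
      (∑ z : Sgn × Sgn, if z.1 = z.2 then W.m z else 0) = y} x

lemma sum_ite_push {X Y : Type} [Fintype X] [Fintype Y] [DecidableEq Y]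
    (p : X → ℝ) (f : X → Y) (P : Y → Prop) [DecidablePred P] :
    ∑ y, (if P y then push p f y else 0) = ∑ x, if P (f x) then p x else 0 := by
  unfold push
  have h1 : ∀ y : Y, (if P y then ∑ x : X, if f x = y then p x else 0 else 0)
      = ∑ x : X, if f x = y then (if P y then p x else 0) else 0 := by
    intro y; split <;> simp
  simp only [h1]
  rw [Finset.sum_comm]
  refine Finset.sum_congr rfl fun x _ => ?_
  have h2 : ∀ y : Y, (if f x = y then (if P y then p x else 0) else 0)
      = if f x = y then (if P (f x) then p x else 0) else 0 := by
    intro y; split <;> simp_all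
  simp only [h2]
  exact Finset.sum_ite_eq Finset.univ (f x) _ |>.trans (by simp)

lemma push_total {X Y : Type} [Fintype X] [Fintype Y] [DecidableEq Y]
    (p : X → ℝ) (f : X → Y) : ∑ y, push p f y = ∑ x, p x := by
  have := sum_ite_push p f (fun _ => True)
  simpa using this

lemma push_push {X Y Z : Type} [Fintype X] [Fintype Y] [DecidableEq Y] [DecidableEq Z]
    (p : X → ℝ) (f : X → Y) (g : Y → Z) :
    push (push p f) g = push p (g ∘ f) := by
  funext z
  show (∑ y, if g y = z then push p f y else 0) = _
  rw [sum_ite_push p f (fun y => g y = z)]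
  rfl

lemma push_nonneg {X Y : Type} [Fintype X] [DecidableEq Y]
    (p : X → ℝ) (hp : ∀ x, 0 ≤ p x) (f : X → Y) (y : Y) : 0 ≤ push p f y := by
  unfold push
  exact Finset.sum_nonneg fun x _ => by split <;> [exact hp x; rfl]


lemma diag_sum {Y : Type} [Fintype Y] [DecidableEq Y] (g : Y → ℝ) (a : Y) :
    (∑ b, if a = b then g b else 0) = g a := by
  rw [Finset.sum_ite_eq Finset.univ a g, if_pos (Finset.mem_univ a)]

lemma diag_sum' {Y : Type} [Fintype Y] [DecidableEq Y] (g : Y → ℝ) (a : Y) :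
    (∑ b, if b = a then g b else 0) = g a := by
  rw [Finset.sum_ite_eq' Finset.univ a g, if_pos (Finset.mem_univ a)]

/-- For a simply consistently connected system, a coupling is multimaximally connected
(each agreement probability equals the maximal agreement probability given the two
marginal distributions) iff it is identically connected. Hence the CbD and
sheaf-theoretic definitions of noncontextuality coincide on such systems. -/
theorem stmt15 {Q C : Type} [Fintype Q] [Fintype C] [DecidableEq Q] [DecidableEq C]
    (pre : Q → C → Bool) (R : (c : C) → FDist ({q : Q // pre q c} → Sgn))
    (hsimple : SimplyCC pre R)
    (T : FDist (Glob pre → Sgn)) (hT : IsCoupling pre R T) :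
    (∀ (q : Q) (c c' : C) (h : pre q c) (h' : pre q c'),
        PairMax (marg pre R c q h) (marg pre R c' q h') (prAgree pre T q c c' h h'))
    ↔ IdConn pre T := by
  -- preliminaries
  have hmarg : ∀ (q : Q) (c : C) (h : pre q c),
      marg pre R c q h = push T.m (fun f => f ⟨(q, c), h⟩) := by
    intro q c h
    have : marg pre R c q h = push (push T.m (restr pre c)) (fun g => g ⟨q, h⟩) := by
      rw [hT c]; rfl
    rw [this, push_push]; rfl
  have hmargnn : ∀ (q : Q) (c : C) (h : pre q c) (a : Sgn), 0 ≤ marg pre R c q h a := by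
    intro q c h a
    exact push_nonneg _ (R c).nonneg _ a
  have hmargtot : ∀ (q : Q) (c : C) (h : pre q c), ∑ a, marg pre R c q h a = 1 := by
    intro q c h
    rw [show marg pre R c q h = push (R c).m (fun f => f ⟨q, h⟩) from rfl,
      push_total, (R c).total]
  have hle1 : ∀ (q : Q) (c c' : C) (h : pre q c) (h' : pre q c'),
      prAgree pre T q c c' h h' ≤ 1 := by
    intro q c c' h h'
    calc prAgree pre T q c c' h h'
        ≤ ∑ f, T.m f := Finset.sum_le_sum fun f _ => by
          split <;> [exact le_refl _; exact T.nonneg f]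
      _ = 1 := T.total
  constructor
  · intro hmax q c c' h h'
    refine le_antisymm (hle1 q c c' h h') ?_
    set μ := marg pre R c q h with hμ
    have hμν : marg pre R c' q h' = μ := (hsimple q c c' h h').symm
    refine (hmax q c c' h h').2
      ⟨{ m := fun z => if z.1 = z.2 then μ z.1 else 0
         nonneg := fun z => by split <;> [exact hmargnn q c h _; rfl]
         total := by
           rw [Fintype.sum_prod_type]
           have h1 : ∀ a : Sgn, (∑ b : Sgn, if a = b then μ a else 0) = μ a := fun a =>
             diag_sum (fun _ => μ a) a
           simp only [h1]
           exact hmargtot q c h }, ?_, ?_, ?_⟩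
    · funext a
      show (∑ z : Sgn × Sgn, if z.1 = a then (if z.1 = z.2 then μ z.1 else 0) else 0) = μ a
      rw [Fintype.sum_prod_type]
      have h1 : ∀ x : Sgn, (∑ y : Sgn, if x = a then (if x = y then μ x else 0) else 0)
          = if x = a then μ x else 0 := by
        intro x
        split
        · exact diag_sum (fun _ => μ x) x
        · exact Finset.sum_const_zero
      simp only [h1]
      exact diag_sum' μ a
    · funext b
      rw [hμν]
      show (∑ z : Sgn × Sgn, if z.2 = b then (if z.1 = z.2 then μ z.1 else 0) else 0) = μ b
      rw [Fintype.sum_prod_type]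
      have h1 : ∀ x : Sgn, (∑ y : Sgn, if y = b then (if x = y then μ x else 0) else 0)
          = if x = b then μ x else 0 := by
        intro x
        rw [Finset.sum_ite_eq' Finset.univ b (fun y => if x = y then μ x else 0),
          if_pos (Finset.mem_univ b)]
      simp only [h1]
      exact diag_sum' μ b
    · show (∑ z : Sgn × Sgn, if z.1 = z.2 then
          (if z.1 = z.2 then μ z.1 else 0) else 0) = 1
      have h1 : ∀ z : Sgn × Sgn, (if z.1 = z.2 then (if z.1 = z.2 then μ z.1 else 0) else 0)
          = if z.1 = z.2 then μ z.1 else 0 := by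
        intro z; split <;> simp_all
      simp only [h1]
      rw [Fintype.sum_prod_type]
      have h2 : ∀ a : Sgn, (∑ b : Sgn, if a = b then μ a else 0) = μ a := fun a =>
        diag_sum (fun _ => μ a) a
      simp only [h2]
      exact hmargtot q c h
  · intro hid q c c' h h'
    rw [hid q c c' h h']
    constructor
    · -- membership: push T along the pair map
      refine ⟨{ m := push T.m (fun f => (f ⟨(q, c), h⟩, f ⟨(q, c'), h'⟩))
                nonneg := push_nonneg _ T.nonneg _
                total := by rw [push_total, T.total] }, ?_, ?_, ?_⟩
      · show push (push T.m _) Prod.fst = _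
        rw [push_push, hmarg q c h]; rfl
      · show push (push T.m _) Prod.snd = _
        rw [push_push, hmarg q c' h']; rfl
      · show (∑ z : Sgn × Sgn, if z.1 = z.2 then
            push T.m (fun f => (f ⟨(q, c), h⟩, f ⟨(q, c'), h'⟩)) z else 0) = 1
        rw [sum_ite_push T.m _ (fun z : Sgn × Sgn => z.1 = z.2)]
        exact hid q c c' h h'
    · rintro y ⟨W, _, hW2, hW3⟩
      calc y = ∑ z : Sgn × Sgn, if z.1 = z.2 then W.m z else 0 := hW3.symm
        _ ≤ ∑ z, W.m z := Finset.sum_le_sum fun z _ => by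
            split <;> [exact le_refl _; exact W.nonneg z]
        _ = 1 := W.total
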